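/- Let p, q, r, s be nonnegative real numbers such that L = pℤ × qℤ × rℤ × sℤ is a lattice of the oscillator group G (a discrete subgroup with compact quotient G/L). Then q > 0, r > 0, there is a positive integer l with p = (π/2)·l, and there is a positive integer k with s = qr/(2k). -/

import Mathlib

open Real

/-- The real 3-dimensional Heisenberg group, as `ℝ³` with the multiplication
`(x,y,z)·(x',y',z') = (x+x', y+y', z+z'+ (xy'-x'y)/2)`. -/
@[ext] structure Heis : Type where
  x : ℝ
  y : ℝ
  z : ℝ

namespace Heis

noncomputable instance : Mul Heis :=
  ⟨fun a b => ⟨a.x + b.x, a.y + b.y, a.z + b.z + (a.x * b.y - b.x * a.y) / 2⟩⟩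

instance : One Heis := ⟨⟨0, 0, 0⟩⟩

instance : Inv Heis := ⟨fun a => ⟨-a.x, -a.y, -a.z⟩⟩

@[simp] lemma mul_x (a b : Heis) : (a * b).x = a.x + b.x := rfl
@[simp] lemma mul_y (a b : Heis) : (a * b).y = a.y + b.y := rfl
@[simp] lemma mul_z (a b : Heis) :
    (a * b).z = a.z + b.z + (a.x * b.y - b.x * a.y) / 2 := rfl
@[simp] lemma one_x : (1 : Heis).x = 0 := rfl
@[simp] lemma one_y : (1 : Heis).y = 0 := rfl
@[simp] lemma one_z : (1 : Heis).z = 0 := rfl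
@[simp] lemma inv_x (a : Heis) : a⁻¹.x = -a.x := rfl
@[simp] lemma inv_y (a : Heis) : a⁻¹.y = -a.y := rfl
@[simp] lemma inv_z (a : Heis) : a⁻¹.z = -a.z := rfl

noncomputable instance : Group Heis where
  mul_assoc a b c := by ext <;> simp <;> ring
  one_mul a := by ext <;> simp
  mul_one a := by ext <;> simp
  inv_mul_cancel a := by ext <;> simp

end Heis

/-- The rotation action `α(t)` of `ℝ` on the Heisenberg group. -/
noncomputable def alphaMap (t : ℝ) (v : Heis) : Heis :=
  ⟨v.x * cos t + v.y * sin t, -v.x * sin t + v.y * cos t, v.z⟩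

@[simp] lemma alphaMap_x (t : ℝ) (v : Heis) :
    (alphaMap t v).x = v.x * cos t + v.y * sin t := rfl
@[simp] lemma alphaMap_y (t : ℝ) (v : Heis) :
    (alphaMap t v).y = -v.x * sin t + v.y * cos t := rfl
@[simp] lemma alphaMap_z (t : ℝ) (v : Heis) : (alphaMap t v).z = v.z := rfl

/-- The oscillator group `G = ℝ ⋉_α H₃(ℝ)`. -/
@[ext] structure Osc : Type where
  t : ℝ
  v : Heis

namespace Osc

noncomputable instance : Mul Osc := ⟨fun a b => ⟨a.t + b.t, a.v * alphaMap a.t b.v⟩⟩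
instance : One Osc := ⟨⟨0, 1⟩⟩
noncomputable instance : Inv Osc := ⟨fun a => ⟨-a.t, alphaMap (-a.t) a.v⁻¹⟩⟩

@[simp] lemma mul_t (a b : Osc) : (a * b).t = a.t + b.t := rfl
@[simp] lemma mul_v (a b : Osc) : (a * b).v = a.v * alphaMap a.t b.v := rfl
@[simp] lemma one_t : (1 : Osc).t = 0 := rfl
@[simp] lemma one_v : (1 : Osc).v = 1 := rfl
@[simp] lemma inv_t (a : Osc) : a⁻¹.t = -a.t := rfl
@[simp] lemma inv_v (a : Osc) : a⁻¹.v = alphaMap (-a.t) a.v⁻¹ := rfl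

lemma alphaMap_one (t : ℝ) : alphaMap t (1 : Heis) = 1 := by
  ext <;> simp

lemma alphaMap_mul (t : ℝ) (v w : Heis) :
    alphaMap t (v * w) = alphaMap t v * alphaMap t w := by
  ext
  · simp; ring
  · simp; ring
  · simp
    linear_combination (w.x * v.y - v.x * w.y) * (sin_sq_add_cos_sq t)

lemma alphaMap_add (s t : ℝ) (v : Heis) :
    alphaMap (s + t) v = alphaMap s (alphaMap t v) := by
  ext <;> simp [cos_add, sin_add] <;> ring

lemma alphaMap_zero (v : Heis) : alphaMap 0 v = v := by
  ext <;> simp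

noncomputable instance : Group Osc where
  mul_assoc a b c := by
    refine Osc.ext (by simp; ring) ?_
    simp only [Osc.mul_v, Osc.mul_t, alphaMap_mul, ← alphaMap_add]
    rw [mul_assoc]
  one_mul a := Osc.ext (by simp) (by simp [alphaMap_zero])
  mul_one a := Osc.ext (by simp) (by simp [alphaMap_one])
  inv_mul_cancel a := by
    refine Osc.ext (by simp) ?_
    simp only [Osc.mul_v, Osc.inv_v, Osc.inv_t, Osc.one_v]
    rw [← alphaMap_mul, inv_mul_cancel, alphaMap_one]

end Osc

/-- `Heis` carries the standard topology of `ℝ³`. -/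
noncomputable instance : TopologicalSpace Heis :=
  TopologicalSpace.induced (fun v => (v.x, v.y, v.z)) inferInstance

/-- `Osc` carries the standard topology of `ℝ⁴`. -/
noncomputable instance : TopologicalSpace Osc :=
  TopologicalSpace.induced (fun g => (g.t, g.v.x, g.v.y, g.v.z)) inferInstance

lemma cos_sin_int (n : ℤ) :
    ∃ a b : ℤ, cos (π / 2 * n) = a ∧ sin (π / 2 * n) = b := by
  induction n using Int.induction_on with
  | zero => exact ⟨1, 0, by simp, by simp⟩
  | succ n ih =>
    obtain ⟨a, b, ha, hb⟩ := ih
    have h : (((n : ℤ) + 1 : ℤ) : ℝ) = ((n : ℤ) : ℝ) + 1 := by push_cast; ring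
    refine ⟨-b, a, ?_, ?_⟩
    · rw [h, mul_add, mul_one, cos_add, ha, hb]
      push_cast
      simp
    · rw [h, mul_add, mul_one, sin_add, ha, hb]
      simp
  | pred n ih =>
    obtain ⟨a, b, ha, hb⟩ := ih
    have h : ((-(n : ℤ) - 1 : ℤ) : ℝ) = ((-(n : ℤ) : ℤ) : ℝ) - 1 := by push_cast; ring
    refine ⟨b, -a, ?_, ?_⟩
    · rw [h, mul_sub, mul_one, cos_sub, ha, hb]
      simp
    · rw [h, mul_sub, mul_one, sin_sub, ha, hb]
      push_cast
      simp

lemma cos_sin_int' (t : ℝ) (h : ∃ j : ℤ, t = π / 2 * j) :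
    ∃ a b : ℤ, cos t = a ∧ sin t = b := by
  obtain ⟨j, rfl⟩ := h
  exact cos_sin_int j

/-- The lattice `θℤ ⋉ Γ_k` in the oscillator group, for `θ` an integer multiple of `π/2`. -/
noncomputable def LamTheta (k : ℕ+) (θ : ℝ) (m : ℤ) (hθ : θ = π / 2 * m) : Subgroup Osc where
  carrier := {g | (∃ n : ℤ, g.t = θ * n) ∧ (∃ a : ℤ, g.v.x = a) ∧ (∃ b : ℤ, g.v.y = b) ∧
    (∃ c : ℤ, g.v.z = (c : ℝ) / (2 * ((k : ℕ) : ℝ)))}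
  one_mem' := ⟨⟨0, by simp⟩, ⟨0, by simp⟩, ⟨0, by simp⟩, ⟨0, by simp⟩⟩
  mul_mem' := by
    rintro g h ⟨⟨n₁, hn₁⟩, ⟨a₁, ha₁⟩, ⟨b₁, hb₁⟩, ⟨c₁, hc₁⟩⟩
      ⟨⟨n₂, hn₂⟩, ⟨a₂, ha₂⟩, ⟨b₂, hb₂⟩, ⟨c₂, hc₂⟩⟩
    obtain ⟨A, B, hA, hB⟩ := cos_sin_int' g.t ⟨m * n₁, by rw [hn₁, hθ]; push_cast; ring⟩
    have hk : ((k : ℕ) : ℝ) ≠ 0 := by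
      exact_mod_cast k.ne_zero
    refine ⟨⟨n₁ + n₂, ?_⟩, ⟨a₁ + (a₂ * A + b₂ * B), ?_⟩, ⟨b₁ + (-(a₂ * B) + b₂ * A), ?_⟩,
      ⟨c₁ + c₂ + (k : ℕ) * (a₁ * (-(a₂ * B) + b₂ * A) - (a₂ * A + b₂ * B) * b₁), ?_⟩⟩
    · simp only [Osc.mul_t, hn₁, hn₂]; push_cast; ring
    · simp only [Osc.mul_v, Heis.mul_x, alphaMap_x, ha₁, ha₂, hb₂, hA, hB]; push_cast; ring
    · simp only [Osc.mul_v, Heis.mul_y, alphaMap_y, hb₁, ha₂, hb₂, hA, hB]; push_cast; ring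
    · simp only [Osc.mul_v, Heis.mul_z, alphaMap_x, alphaMap_y, alphaMap_z,
        ha₁, hb₁, ha₂, hb₂, hc₁, hc₂, hA, hB]
      field_simp
      push_cast; ring
  inv_mem' := by
    rintro g ⟨⟨n₁, hn₁⟩, ⟨a₁, ha₁⟩, ⟨b₁, hb₁⟩, ⟨c₁, hc₁⟩⟩
    obtain ⟨A, B, hA, hB⟩ := cos_sin_int' g.t ⟨m * n₁, by rw [hn₁, hθ]; push_cast; ring⟩
    refine ⟨⟨-n₁, ?_⟩, ⟨-(a₁ * A) + b₁ * B, ?_⟩, ⟨-(a₁ * B) - b₁ * A, ?_⟩, ⟨-c₁, ?_⟩⟩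
    · simp only [Osc.inv_t, hn₁]; push_cast; ring
    · simp only [Osc.inv_v, alphaMap_x, Heis.inv_x, Heis.inv_y, cos_neg, sin_neg,
        ha₁, hb₁, hA, hB]
      push_cast; ring
    · simp only [Osc.inv_v, alphaMap_y, Heis.inv_x, Heis.inv_y, cos_neg, sin_neg,
        ha₁, hb₁, hA, hB]
      push_cast; ring
    · simp only [Osc.inv_v, alphaMap_z, Heis.inv_z, hc₁]
      push_cast; ring

/-- The lattice `Λ_{k,0} = 2πℤ × Γ_k`. -/
noncomputable def Lam0 (k : ℕ+) : Subgroup Osc :=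
  LamTheta k (2 * π) 4 (by push_cast; ring)

/-- The lattice `Λ_{k,π} = πℤ × Γ_k`. -/
noncomputable def LamPi (k : ℕ+) : Subgroup Osc :=
  LamTheta k π 2 (by push_cast; ring)

/-- The lattice `Λ_{k,π/2} = (π/2)ℤ × Γ_k`. -/
noncomputable def LamPi2 (k : ℕ+) : Subgroup Osc :=
  LamTheta k (π / 2) 1 (by push_cast; ring)

/-- The lattice `Γ_k = ℤ × ℤ × (1/(2k))ℤ` in the Heisenberg group. -/
noncomputable def Gamma (k : ℕ+) : Subgroup Heis where
  carrier := {v | (∃ a : ℤ, v.x = a) ∧ (∃ b : ℤ, v.y = b) ∧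
    (∃ c : ℤ, v.z = (c : ℝ) / (2 * ((k : ℕ) : ℝ)))}
  one_mem' := ⟨⟨0, by simp⟩, ⟨0, by simp⟩, ⟨0, by simp⟩⟩
  mul_mem' := by
    rintro v w ⟨⟨a₁, ha₁⟩, ⟨b₁, hb₁⟩, ⟨c₁, hc₁⟩⟩ ⟨⟨a₂, ha₂⟩, ⟨b₂, hb₂⟩, ⟨c₂, hc₂⟩⟩
    have hk : ((k : ℕ) : ℝ) ≠ 0 := by exact_mod_cast k.ne_zero
    refine ⟨⟨a₁ + a₂, ?_⟩, ⟨b₁ + b₂, ?_⟩, ⟨c₁ + c₂ + (k : ℕ) * (a₁ * b₂ - a₂ * b₁), ?_⟩⟩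
    · simp [ha₁, ha₂]
    · simp [hb₁, hb₂]
    · simp only [Heis.mul_z, ha₁, hb₁, ha₂, hb₂, hc₁, hc₂]
      field_simp
      push_cast; ring
  inv_mem' := by
    rintro v ⟨⟨a₁, ha₁⟩, ⟨b₁, hb₁⟩, ⟨c₁, hc₁⟩⟩
    refine ⟨⟨-a₁, by simp [ha₁]⟩, ⟨-b₁, by simp [hb₁]⟩, ⟨-c₁, ?_⟩⟩
    simp only [Heis.inv_z, hc₁]
    push_cast
    ring

/-- The subset `pℤ × qℤ × rℤ × sℤ` of the oscillator group. -/
def prodSet (p q r s : ℝ) : Set Osc :=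
  {g | (∃ n : ℤ, g.t = p * n) ∧ (∃ n : ℤ, g.v.x = q * n) ∧
    (∃ n : ℤ, g.v.y = r * n) ∧ (∃ n : ℤ, g.v.z = s * n)}



/-! ### Auxiliary topology: `Osc` is a topological group -/

lemma Osc.continuous_emb :
    Continuous (fun g : Osc => (g.t, g.v.x, g.v.y, g.v.z)) := continuous_induced_dom

lemma Osc.continuous_t : Continuous (fun g : Osc => g.t) := Osc.continuous_emb.fst
lemma Osc.continuous_x : Continuous (fun g : Osc => g.v.x) := Osc.continuous_emb.snd.fst
lemma Osc.continuous_y : Continuous (fun g : Osc => g.v.y) := Osc.continuous_emb.snd.snd.fst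
lemma Osc.continuous_z : Continuous (fun g : Osc => g.v.z) := Osc.continuous_emb.snd.snd.snd

noncomputable instance : IsTopologicalGroup Osc where
  continuous_mul := by
    apply continuous_induced_rng.mpr
    have h1t : Continuous (fun p : Osc × Osc => p.1.t) := Osc.continuous_t.comp continuous_fst
    have h2t : Continuous (fun p : Osc × Osc => p.2.t) := Osc.continuous_t.comp continuous_snd
    have h1x : Continuous (fun p : Osc × Osc => p.1.v.x) := Osc.continuous_x.comp continuous_fst
    have h2x : Continuous (fun p : Osc × Osc => p.2.v.x) := Osc.continuous_x.comp continuous_snd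
    have h1y : Continuous (fun p : Osc × Osc => p.1.v.y) := Osc.continuous_y.comp continuous_fst
    have h2y : Continuous (fun p : Osc × Osc => p.2.v.y) := Osc.continuous_y.comp continuous_snd
    have h1z : Continuous (fun p : Osc × Osc => p.1.v.z) := Osc.continuous_z.comp continuous_fst
    have h2z : Continuous (fun p : Osc × Osc => p.2.v.z) := Osc.continuous_z.comp continuous_snd
    have hc : Continuous (fun p : Osc × Osc => cos p.1.t) := Real.continuous_cos.comp h1t
    have hs : Continuous (fun p : Osc × Osc => sin p.1.t) := Real.continuous_sin.comp h1t
    show Continuous fun p : Osc × Osc =>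
      ((p.1 * p.2).t, (p.1 * p.2).v.x, (p.1 * p.2).v.y, (p.1 * p.2).v.z)
    simp only [Osc.mul_t, Osc.mul_v, Heis.mul_x, Heis.mul_y, Heis.mul_z,
      alphaMap_x, alphaMap_y, alphaMap_z]
    refine (h1t.add h2t).prodMk (Continuous.prodMk ?_ (Continuous.prodMk ?_ ?_))
    · exact h1x.add ((h2x.mul hc).add (h2y.mul hs))
    · exact h1y.add (((h2x.neg).mul hs).add (h2y.mul hc))
    · exact ((h1z.add h2z).add
        (((h1x.mul (((h2x.neg).mul hs).add (h2y.mul hc))).sub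
          (((h2x.mul hc).add (h2y.mul hs)).mul h1y)).div_const 2))
  continuous_inv := by
    apply continuous_induced_rng.mpr
    have ht : Continuous (fun g : Osc => g.t) := Osc.continuous_t
    have hx : Continuous (fun g : Osc => g.v.x) := Osc.continuous_x
    have hy : Continuous (fun g : Osc => g.v.y) := Osc.continuous_y
    have hz : Continuous (fun g : Osc => g.v.z) := Osc.continuous_z
    have hc : Continuous (fun g : Osc => cos (-g.t)) := Real.continuous_cos.comp ht.neg
    have hs : Continuous (fun g : Osc => sin (-g.t)) := Real.continuous_sin.comp ht.neg
    show Continuous fun g : Osc => ((g⁻¹).t, (g⁻¹).v.x, (g⁻¹).v.y, (g⁻¹).v.z)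
    simp only [Osc.inv_t, Osc.inv_v, alphaMap_x, alphaMap_y, alphaMap_z,
      Heis.inv_x, Heis.inv_y, Heis.inv_z]
    refine ht.neg.prodMk (Continuous.prodMk ?_ (Continuous.prodMk ?_ hz.neg))
    · exact ((hx.neg).mul hc).add ((hy.neg).mul hs)
    · exact (((hx.neg).neg).mul hs).add ((hy.neg).mul hc)

/-- From compactness of the quotient, every group element can be written `u * s`
with `s` in the subgroup and `u` of bounded size. -/
lemma Osc.exists_bound (S : Subgroup Osc) (hcpt : CompactSpace (Osc ⧸ S)) :
    ∃ C : ℝ, 0 ≤ C ∧ ∀ g : Osc, ∃ u : Osc, u⁻¹ * g ∈ S ∧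
      |u.t| ≤ C ∧ |u.v.x| ≤ C ∧ |u.v.y| ≤ C := by
  classical
  let e : Osc → ℝ × ℝ × ℝ × ℝ := fun g => (g.t, g.v.x, g.v.y, g.v.z)
  have he : Continuous e := Osc.continuous_emb
  let U : ℕ → Set Osc := fun n => e ⁻¹' Metric.ball 0 n
  have hUopen : ∀ n, IsOpen (U n) := fun n => Metric.isOpen_ball.preimage he
  have hmono : ∀ m n : ℕ, m ≤ n → U m ⊆ U n := by
    intro m n hmn
    exact Set.preimage_mono (Metric.ball_subset_ball (by exact_mod_cast hmn))
  have hdir : Directed (· ⊆ ·) fun n => (QuotientGroup.mk '' U n : Set (Osc ⧸ S)) := by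
    intro m n
    exact ⟨max m n, Set.image_mono (hmono _ _ (le_max_left m n)),
      Set.image_mono (hmono _ _ (le_max_right m n))⟩
  have hcover : (Set.univ : Set (Osc ⧸ S)) ⊆ ⋃ n, QuotientGroup.mk '' U n := by
    intro q _
    obtain ⟨g, rfl⟩ := QuotientGroup.mk_surjective q
    obtain ⟨n, hn⟩ := exists_nat_gt (dist (e g) 0)
    exact Set.mem_iUnion.mpr ⟨n, ⟨g, Metric.mem_ball.mpr hn, rfl⟩⟩
  have := hcpt
  obtain ⟨N, hN⟩ := isCompact_univ.elim_directed_cover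
    (fun n => (QuotientGroup.mk '' U n : Set (Osc ⧸ S)))
    (fun n => QuotientGroup.isOpenMap_coe _ (hUopen n)) hcover hdir
  refine ⟨N, Nat.cast_nonneg N, fun g => ?_⟩
  obtain ⟨u, huU, huq⟩ := hN (Set.mem_univ (QuotientGroup.mk g : Osc ⧸ S))
  have hmem : u⁻¹ * g ∈ S := QuotientGroup.eq.mp huq
  have hball : ‖e u‖ < N := by
    simpa [dist_zero_right] using (Metric.mem_ball.mp huU)
  have h1 : |u.t| ≤ ‖e u‖ := by
    simpa [Real.norm_eq_abs] using (norm_fst_le (e u))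
  have h2 : |u.v.x| ≤ ‖e u‖ := by
    have := (norm_fst_le (e u).2).trans (norm_snd_le (e u))
    simpa [Real.norm_eq_abs] using this
  have h3 : |u.v.y| ≤ ‖e u‖ := by
    have := ((norm_fst_le (e u).2.2).trans (norm_snd_le (e u).2)).trans (norm_snd_le (e u))
    simpa [Real.norm_eq_abs] using this
  exact ⟨u, hmem, h1.trans hball.le, h2.trans hball.le, h3.trans hball.le⟩

/-- If `p, q, r, s ≥ 0` and `L = pℤ × qℤ × rℤ × sℤ` is a lattice of the
oscillator group, then `q > 0`, `r > 0`, `p = (π/2)l` for a positive integer `l`, and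
`s = qr/(2k)` for a positive integer `k`. -/
theorem statement11 (p q r s : ℝ) (hp : 0 ≤ p) (hq : 0 ≤ q) (hr : 0 ≤ r) (hs : 0 ≤ s)
    (S : Subgroup Osc) (hS : (S : Set Osc) = prodSet p q r s)
    (hdisc : DiscreteTopology S) (hcpt : CompactSpace (Osc ⧸ S)) :
    0 < q ∧ 0 < r ∧ (∃ l : ℕ+, p = π / 2 * ((l : ℕ) : ℝ)) ∧
      ∃ k : ℕ+, s = q * r / (2 * ((k : ℕ) : ℝ)) := by
  have hmem : ∀ a : Osc, a ∈ S ↔ a ∈ prodSet p q r s := by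
    intro a
    rw [← SetLike.mem_coe, hS]
  obtain ⟨C, hC0, hC⟩ := Osc.exists_bound S hcpt
  -- `p ≠ 0`
  have hp0 : p ≠ 0 := by
    intro h
    obtain ⟨u, hus, hut, -, -⟩ := hC ⟨C + 1, 1⟩
    obtain ⟨⟨n, hn⟩, -, -, -⟩ := (hmem _).mp hus
    have hn' : -u.t + (C + 1) = p * n := hn
    rw [h, zero_mul] at hn'
    have := abs_le.mp hut
    linarith
  -- membership of the basic elements
  have haS : (⟨p, 1⟩ : Osc) ∈ S :=
    (hmem _).mpr ⟨⟨1, by norm_num⟩, ⟨0, by simp⟩, ⟨0, by simp⟩, ⟨0, by simp⟩⟩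
  have hbS : (⟨0, ⟨0, r, 0⟩⟩ : Osc) ∈ S :=
    (hmem _).mpr ⟨⟨0, by simp⟩, ⟨0, by simp⟩, ⟨1, by norm_num⟩, ⟨0, by simp⟩⟩
  have hb'S : (⟨0, ⟨q, 0, 0⟩⟩ : Osc) ∈ S :=
    (hmem _).mpr ⟨⟨0, by simp⟩, ⟨1, by norm_num⟩, ⟨0, by simp⟩, ⟨0, by simp⟩⟩
  -- `q > 0`
  have hqpos : 0 < q := by
    rcases hq.lt_or_eq with h | h
    · exact h
    exfalso
    have hx0 : ∀ a : Osc, a ∈ S → a.v.x = 0 := by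
      intro a ha
      obtain ⟨-, ⟨n, hn⟩, -, -⟩ := (hmem a).mp ha
      rw [hn, ← h, zero_mul]
    by_cases hr0 : r = 0
    · -- all `x` and `y` coordinates vanish in `S`
      have hy0 : ∀ a : Osc, a ∈ S → a.v.y = 0 := by
        intro a ha
        obtain ⟨-, -, ⟨n, hn⟩, -⟩ := (hmem a).mp ha
        rw [hn, hr0, zero_mul]
      obtain ⟨u, hus, -, hux, -⟩ := hC ⟨0, ⟨C + 1, 0, 0⟩⟩
      set w : Osc := u⁻¹ * ⟨0, ⟨C + 1, 0, 0⟩⟩ with hw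
      have hxeq := congrArg (fun a : Osc => a.v.x)
        (mul_inv_cancel_left u (⟨0, ⟨C + 1, 0, 0⟩⟩ : Osc))
      rw [← hw] at hxeq
      simp only [Osc.mul_v, Heis.mul_x, alphaMap_x] at hxeq
      rw [hx0 _ hus, hy0 _ hus] at hxeq
      simp at hxeq
      have := abs_le.mp hux
      linarith
    · have hrpos : 0 < r := lt_of_le_of_ne hr (Ne.symm hr0)
      obtain ⟨-, ⟨n, hn⟩, -, -⟩ := (hmem _).mp (S.mul_mem haS hbS)
      have hn' : r * sin p = q * n := by simpa using hn
      have hsin : sin p = 0 := by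
        rw [← h, zero_mul] at hn'
        rcases mul_eq_zero.mp hn' with h1 | h1
        · exact absurd h1 hr0
        · exact h1
      obtain ⟨m, hmm⟩ := sin_eq_zero_iff.mp hsin
      obtain ⟨u, hus, -, hux, -⟩ := hC ⟨0, ⟨C + 1, 0, 0⟩⟩
      set w : Osc := u⁻¹ * ⟨0, ⟨C + 1, 0, 0⟩⟩ with hw
      obtain ⟨⟨n0, hn0⟩, -, -, -⟩ := (hmem _).mp hus
      have hueq : u.t + w.t = 0 :=
        congrArg (fun a : Osc => a.t) (mul_inv_cancel_left u (⟨0, ⟨C + 1, 0, 0⟩⟩ : Osc))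
      rw [hn0] at hueq
      have hut2 : u.t = ((-(m * n0) : ℤ) : ℝ) * π := by
        push_cast
        linear_combination hueq + (n0 : ℝ) * hmm
      have hsinu : sin u.t = 0 := by rw [hut2]; exact sin_int_mul_pi _
      have hxeq := congrArg (fun a : Osc => a.v.x)
        (mul_inv_cancel_left u (⟨0, ⟨C + 1, 0, 0⟩⟩ : Osc))
      rw [← hw] at hxeq
      simp only [Osc.mul_v, Heis.mul_x, alphaMap_x] at hxeq
      rw [hx0 _ hus, hsinu] at hxeq
      simp at hxeq
      have := abs_le.mp hux
      linarith
  -- `r > 0`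
  have hrpos : 0 < r := by
    rcases hr.lt_or_eq with h | h
    · exact h
    exfalso
    have hy0 : ∀ a : Osc, a ∈ S → a.v.y = 0 := by
      intro a ha
      obtain ⟨-, -, ⟨n, hn⟩, -⟩ := (hmem a).mp ha
      rw [hn, ← h, zero_mul]
    obtain ⟨-, -, ⟨n, hn⟩, -⟩ := (hmem _).mp (S.mul_mem haS hb'S)
    have hn' : -q * sin p = r * n := by simpa using hn
    have hsin : sin p = 0 := by
      rw [← h, zero_mul] at hn'
      have h1 : q * sin p = 0 := by linarith
      rcases mul_eq_zero.mp h1 with h1 | h1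
      · exact absurd h1 hqpos.ne'
      · exact h1
    obtain ⟨m, hmm⟩ := sin_eq_zero_iff.mp hsin
    obtain ⟨u, hus, -, -, huy⟩ := hC ⟨0, ⟨0, C + 1, 0⟩⟩
    set w : Osc := u⁻¹ * ⟨0, ⟨0, C + 1, 0⟩⟩ with hw
    obtain ⟨⟨n0, hn0⟩, -, -, -⟩ := (hmem _).mp hus
    have hueq : u.t + w.t = 0 :=
      congrArg (fun a : Osc => a.t) (mul_inv_cancel_left u (⟨0, ⟨0, C + 1, 0⟩⟩ : Osc))
    rw [hn0] at hueq
    have hut2 : u.t = ((-(m * n0) : ℤ) : ℝ) * π := by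
      push_cast
      linear_combination hueq + (n0 : ℝ) * hmm
    have hsinu : sin u.t = 0 := by rw [hut2]; exact sin_int_mul_pi _
    have hyeq := congrArg (fun a : Osc => a.v.y)
      (mul_inv_cancel_left u (⟨0, ⟨0, C + 1, 0⟩⟩ : Osc))
    rw [← hw] at hyeq
    simp only [Osc.mul_v, Heis.mul_y, alphaMap_y] at hyeq
    rw [hy0 _ hus, hsinu] at hyeq
    simp at hyeq
    have := abs_le.mp huy
    linarith
  refine ⟨hqpos, hrpos, ?_, ?_⟩
  · -- `p = (π/2) l`
    obtain ⟨-, ⟨n, hn⟩, -, -⟩ := (hmem _).mp (S.mul_mem haS hb'S)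
    have hcos : cos p = n := by
      have hn' : q * cos p = q * n := by simpa using hn
      exact mul_left_cancel₀ hqpos.ne' hn'
    have hsc : sin p = 0 ∨ cos p = 0 := by
      have h1 : |(n : ℝ)| ≤ 1 := by rw [← hcos]; exact abs_cos_le_one p
      have h1' := abs_le.mp h1
      have l1 : (-1 : ℤ) ≤ n := by exact_mod_cast h1'.1
      have l2 : n ≤ 1 := by exact_mod_cast h1'.2
      have hpy := sin_sq_add_cos_sq p
      interval_cases n
      · left
        have hc : cos p = -1 := by rw [hcos]; norm_num
        have h2 : sin p ^ 2 = 0 := by rw [hc] at hpy; nlinarith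
        exact pow_eq_zero_iff (two_ne_zero) |>.mp h2
      · right
        rw [hcos]; norm_num
      · left
        have hc : cos p = 1 := by rw [hcos]; norm_num
        have h2 : sin p ^ 2 = 0 := by rw [hc] at hpy; nlinarith
        exact pow_eq_zero_iff (two_ne_zero) |>.mp h2
    have hsin2 : sin (2 * p) = 0 := by
      rw [sin_two_mul]
      rcases hsc with h | h <;> rw [h] <;> ring
    obtain ⟨j, hj⟩ := sin_eq_zero_iff.mp hsin2
    have hppos : 0 < p := lt_of_le_of_ne hp (Ne.symm hp0)
    have hjpos : 0 < j := by
      by_contra hle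
      push_neg at hle
      have hle' : ((j : ℤ) : ℝ) ≤ 0 := by exact_mod_cast hle
      nlinarith [pi_pos]
    refine ⟨⟨j.toNat, by omega⟩, ?_⟩
    show p = π / 2 * ((j.toNat : ℕ) : ℝ)
    have hcast : ((j.toNat : ℕ) : ℝ) = ((j : ℤ) : ℝ) := by
      exact_mod_cast Int.toNat_of_nonneg hjpos.le
    rw [hcast]
    linarith
  · -- `s = qr/(2k)`
    have ha2 : (⟨0, ⟨q, 0, 0⟩⟩ : Osc) ∈ S := hb'S
    obtain ⟨-, -, -, ⟨m, hm⟩⟩ := (hmem _).mp (S.mul_mem ha2 hbS)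
    have hm' : q * r / 2 = s * m := by
      have := hm
      simp at this
      linarith
    have hspos : 0 < s := by
      rcases hs.lt_or_eq with h | h
      · exact h
      exfalso
      rw [← h, zero_mul] at hm'
      nlinarith
    have hmpos : 0 < m := by
      have h1 : (0 : ℝ) < s * m := by rw [← hm']; positivity
      have h2 : (0 : ℝ) < (m : ℝ) := by
        by_contra hle
        push_neg at hle
        nlinarith
      exact_mod_cast h2
    refine ⟨⟨m.toNat, by omega⟩, ?_⟩
    show s = q * r / (2 * ((m.toNat : ℕ) : ℝ))
    have hcast : ((m.toNat : ℕ) : ℝ) = ((m : ℤ) : ℝ) := by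
      exact_mod_cast Int.toNat_of_nonneg hmpos.le
    rw [hcast]
    have hm0 : ((m : ℤ) : ℝ) ≠ 0 := by positivity
    field_simp
    linarith
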